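/- If $\Phi$ and $\Theta$ are creation-incoherent quantum channels, then $\Phi\otimes\Theta$ is creation-incoherent. -/

import Mathlib

open Matrix
open scoped ComplexOrder

noncomputable def deph {ι : Type} [Fintype ι] [DecidableEq ι] :
    Matrix ι ι ℂ →ₗ[ℂ] Matrix ι ι ℂ where
  toFun ρ := Matrix.diagonal fun i => ρ i i
  map_add' ρ σ := by
    ext i j
    by_cases h : i = j <;> simp [Matrix.diagonal_apply, h]
  map_smul' c ρ := by
    ext i j
    by_cases h : i = j <;> simp [Matrix.diagonal_apply, h]

def IsKrausChannel {ι κ : Type} [Fintype ι] [DecidableEq ι] [Fintype κ] [DecidableEq κ]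
    (Φ : Matrix ι ι ℂ →ₗ[ℂ] Matrix κ κ ℂ) : Prop :=
  ∃ (N : ℕ) (K : Fin N → Matrix κ ι ℂ),
    (∀ ρ, Φ ρ = ∑ n, K n * ρ * (K n)ᴴ) ∧ (∑ n, (K n)ᴴ * K n = 1)

/-- Creation-incoherent: `Φ ∘ Δ = Δ ∘ Φ ∘ Δ`. -/
def IsCI {ι κ : Type} [Fintype ι] [DecidableEq ι] [Fintype κ] [DecidableEq κ]
    (Φ : Matrix ι ι ℂ →ₗ[ℂ] Matrix κ κ ℂ) : Prop :=
  LinearMap.comp Φ deph = LinearMap.comp deph (LinearMap.comp Φ deph)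

/-- Tensor product of linear maps on matrix spaces (Kronecker form). -/
noncomputable def tensorLinMap {ι₁ ι₂ κ₁ κ₂ : Type}
    [Fintype ι₁] [DecidableEq ι₁] [Fintype ι₂] [DecidableEq ι₂]
    [Fintype κ₁] [DecidableEq κ₁] [Fintype κ₂] [DecidableEq κ₂]
    (Φ : Matrix ι₁ ι₁ ℂ →ₗ[ℂ] Matrix κ₁ κ₁ ℂ)
    (Ψ : Matrix ι₂ ι₂ ℂ →ₗ[ℂ] Matrix κ₂ κ₂ ℂ) :
    Matrix (ι₁ × ι₂) (ι₁ × ι₂) ℂ →ₗ[ℂ] Matrix (κ₁ × κ₂) (κ₁ × κ₂) ℂ where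
  toFun ρ := Matrix.of fun p q =>
    ∑ i, ∑ j, ∑ k, ∑ l, ρ (i, k) (j, l) *
      (Φ (Matrix.single i j 1) p.1 q.1 * Ψ (Matrix.single k l 1) p.2 q.2)
  map_add' ρ σ := by
    ext p q
    simp [Matrix.add_apply, add_mul, Finset.sum_add_distrib]
  map_smul' c ρ := by
    ext p q
    simp [Matrix.smul_apply, smul_eq_mul, Finset.mul_sum, mul_assoc]

lemma offdiag_of_CI {ι κ : Type} [Fintype ι] [DecidableEq ι] [Fintype κ] [DecidableEq κ]
    (Φ : Matrix ι ι ℂ →ₗ[ℂ] Matrix κ κ ℂ) (hΦ : IsCI Φ) (i : ι) {p q : κ} (hpq : p ≠ q) :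
    Φ (Matrix.single i i 1) p q = 0 := by
  have hd : deph (Matrix.single i i 1) = Matrix.single i i 1 := by
    ext x y
    by_cases h : x = y
    · subst h
      simp [deph, Matrix.diagonal_apply, Matrix.single]
    · simp only [deph, LinearMap.coe_mk, AddHom.coe_mk, Matrix.diagonal_apply, h, if_false]
      have : ¬(i = x ∧ i = y) := by rintro ⟨rfl, rfl⟩; exact h rfl
      simp [Matrix.single, Matrix.of_apply, this]
  have h := congrArg (fun f => f (Matrix.single i i 1)) hΦ
  simp only [LinearMap.comp_apply, hd] at h
  rw [h]
  simp [deph, Matrix.diagonal_apply, hpq]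

theorem stmt4 {a b c d : ℕ}
    (Φ : Matrix (Fin a) (Fin a) ℂ →ₗ[ℂ] Matrix (Fin b) (Fin b) ℂ)
    (Θ : Matrix (Fin c) (Fin c) ℂ →ₗ[ℂ] Matrix (Fin d) (Fin d) ℂ)
    (hΦc : IsKrausChannel Φ) (hΘc : IsKrausChannel Θ)
    (hΦ : IsCI Φ) (hΘ : IsCI Θ) :
    IsCI (tensorLinMap Φ Θ) := by
  apply LinearMap.ext
  intro ρ
  simp only [LinearMap.comp_apply]
  ext p q
  rcases eq_or_ne p q with rfl | hpq
  · simp [deph, Matrix.diagonal_apply]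
  · have hr : deph (tensorLinMap Φ Θ (deph ρ)) p q = 0 := by
      simp [deph, Matrix.diagonal_apply, hpq]
    rw [hr]
    show (∑ i, ∑ j, ∑ k, ∑ l, (deph ρ) (i, k) (j, l) *
      (Φ (Matrix.single i j 1) p.1 q.1 *
        Θ (Matrix.single k l 1) p.2 q.2)) = 0
    apply Finset.sum_eq_zero; intro i _
    apply Finset.sum_eq_zero; intro j _
    apply Finset.sum_eq_zero; intro k _
    apply Finset.sum_eq_zero; intro l _
    by_cases h : (i, k) = (j, l)
    · obtain ⟨rfl, rfl⟩ := Prod.mk_inj.mp h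
      rcases (Prod.ext_iff.not.mp hpq |> not_and_or.mp) with h1 | h2
      · rw [offdiag_of_CI Φ hΦ i h1]; ring
      · rw [offdiag_of_CI Θ hΘ k h2]; ring
    · have : (deph ρ) (i, k) (j, l) = 0 := by
        simp [deph, Matrix.diagonal_apply, h]
      rw [this]; ring
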